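/- A game m with m(∅)=0 is supermodular if and only if for every pair of sets A,B ⊆ N, the sum of the Möbius inversion μ_m(D) over all D ⊆ A∪B with D∖A ≠ ∅ and D∖B ≠ ∅ is nonnegative. -/

import Mathlib

open Finset

/-- A game is supermodular if `m A + m B ≤ m (A ∪ B) + m (A ∩ B)` for all `A, B`. -/
def Supermod {N : Type*} [DecidableEq N] (m : Finset N → ℝ) : Prop :=
  ∀ A B : Finset N, m A + m B ≤ m (A ∪ B) + m (A ∩ B)

/-- The Möbius inversion of a set function. -/
def mobius {N : Type*} [DecidableEq N] (m : Finset N → ℝ) (A : Finset N) : ℝ :=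
  ∑ B ∈ A.powerset, (-1 : ℝ) ^ (A.card - B.card) * m B

lemma sum_pow_neg_one {N : Type*} [DecidableEq N] (x : Finset N) :
    (∑ E ∈ x.powerset, (-1 : ℝ) ^ E.card) = if x = ∅ then 1 else 0 := by
  have := Finset.sum_powerset_neg_one_pow_card (x := x)
  have h2 : ((∑ m ∈ x.powerset, (-1 : ℤ) ^ m.card : ℤ) : ℝ)
      = ∑ E ∈ x.powerset, (-1 : ℝ) ^ E.card := by push_cast; rfl
  rw [← h2, this]
  by_cases h : x = ∅ <;> simp [h]

lemma mobius_sum_inner {N : Type*} [DecidableEq N] (S B : Finset N) (hB : B ⊆ S) :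
    ∑ D ∈ S.powerset.filter (fun D => B ⊆ D), (-1 : ℝ) ^ (D.card - B.card)
      = if B = S then 1 else 0 := by
  have h : ∑ D ∈ S.powerset.filter (fun D => B ⊆ D), (-1 : ℝ) ^ (D.card - B.card)
      = ∑ E ∈ (S \ B).powerset, (-1 : ℝ) ^ E.card := by
    refine Finset.sum_nbij' (fun D => D \ B) (fun E => B ∪ E) ?_ ?_ ?_ ?_ ?_
    · intro D hD
      simp only [mem_filter, mem_powerset] at hD ⊢
      exact sdiff_subset_sdiff hD.1 le_rfl
    · intro E hE
      simp only [mem_powerset] at hE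
      simp only [mem_filter, mem_powerset]
      exact ⟨union_subset hB (hE.trans (sdiff_subset)), subset_union_left⟩
    · intro D hD
      simp only [mem_filter, mem_powerset] at hD
      exact union_sdiff_of_subset hD.2
    · intro E hE
      simp only [mem_powerset] at hE
      show (B ∪ E) \ B = E
      rw [union_sdiff_left]
      exact sdiff_eq_self_of_disjoint (disjoint_of_subset_left hE sdiff_disjoint)
    · intro D hD
      simp only [mem_filter, mem_powerset] at hD
      congr 1
      rw [card_sdiff_of_subset hD.2]
  rw [h, sum_pow_neg_one]
  by_cases hBS : B = S
  · simp [hBS]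
  · have : S \ B ≠ ∅ := by
      rw [Ne, sdiff_eq_empty_iff_subset]
      exact fun hSB => hBS (subset_antisymm hB hSB)
    simp [this, hBS]

lemma mobius_inv {N : Type*} [DecidableEq N] (m : Finset N → ℝ) (S : Finset N) :
    ∑ D ∈ S.powerset, mobius m D = m S := by
  have hrw : ∀ D ∈ S.powerset, mobius m D
      = ∑ B ∈ S.powerset, if B ⊆ D then (-1 : ℝ) ^ (D.card - B.card) * m B else 0 := by
    intro D hD
    rw [mem_powerset] at hD
    rw [mobius, ← Finset.sum_filter]
    congr 1
    ext B
    simp only [mem_filter, mem_powerset]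
    exact ⟨fun h => ⟨h.trans hD, h⟩, fun h => h.2⟩
  rw [Finset.sum_congr rfl hrw, Finset.sum_comm]
  have hstep : ∀ B ∈ S.powerset,
      (∑ D ∈ S.powerset, if B ⊆ D then (-1 : ℝ) ^ (D.card - B.card) * m B else 0)
      = if B = S then m B else 0 := by
    intro B hB
    rw [mem_powerset] at hB
    rw [← Finset.sum_filter, ← Finset.sum_mul, mobius_sum_inner S B hB]
    by_cases h : B = S <;> simp [h]
  rw [Finset.sum_congr rfl hstep, Finset.sum_ite_eq' S.powerset S m]
  simp

lemma key_identity {N : Type*} [DecidableEq N] (m : Finset N → ℝ) (A B : Finset N) :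
    ∑ D ∈ (A ∪ B).powerset.filter (fun D => (D \ A).Nonempty ∧ (D \ B).Nonempty),
        mobius m D = m (A ∪ B) + m (A ∩ B) - m A - m B := by
  have h1 := mobius_inv m (A ∪ B)
  have h2 := mobius_inv m A
  have h3 := mobius_inv m B
  have h4 := mobius_inv m (A ∩ B)
  have hsplit := Finset.sum_filter_add_sum_filter_not (A ∪ B).powerset
    (fun D => (D \ A).Nonempty ∧ (D \ B).Nonempty) (mobius m)
  have hnot : (A ∪ B).powerset.filter
      (fun D => ¬((D \ A).Nonempty ∧ (D \ B).Nonempty)) = A.powerset ∪ B.powerset := by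
    ext D
    simp only [mem_filter, mem_powerset, mem_union, sdiff_nonempty, not_and_or, not_not]
    constructor
    · rintro ⟨_, h | h⟩
      · exact Or.inl h
      · exact Or.inr h
    · rintro (h | h)
      · exact ⟨h.trans subset_union_left, Or.inl h⟩
      · exact ⟨h.trans subset_union_right, Or.inr h⟩
  have hint : A.powerset ∩ B.powerset = (A ∩ B).powerset := by
    ext D
    simp only [mem_inter, mem_powerset]
    exact subset_inter_iff.symm
  have huni := Finset.sum_union_inter (s₁ := A.powerset) (s₂ := B.powerset) (f := mobius m)
  rw [hint, h4] at huni
  rw [hnot, h1] at hsplit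
  linarith

theorem stmt15 {N : Type*} [Fintype N] [DecidableEq N]
    (m : Finset N → ℝ) (hm : m ∅ = 0) :
    Supermod m ↔
      ∀ A B : Finset N,
        0 ≤ ∑ D ∈ (A ∪ B).powerset.filter (fun D => (D \ A).Nonempty ∧ (D \ B).Nonempty),
              mobius m D := by
  constructor
  · intro h A B
    have hk := key_identity m A B
    have := h A B
    rw [hk]
    linarith
  · intro h A B
    have hk := key_identity m A B
    have := h A B
    rw [hk] at this
    linarith
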